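/- Let p1, p2, q be finite types and X (p1 × q), Y (p2 × q) real matrices with ‖X‖ + ‖Y‖ < 1. Then for every real matrix Δ1 (q × p2) with ‖Δ1‖ ≤ 1, the matrix I - Y*Δ1 is invertible and ‖X + X*Δ1*(I - Y*Δ1)⁻¹*Y‖ < 1. -/

import Mathlib

open Matrix

attribute [local instance] Matrix.linftyOpNormedAddCommGroup
attribute [local instance] Matrix.linftyOpNormedRing

/-- Implication (26) from the proof of Theorem 3: if `‖X‖ + ‖Y‖ < 1`, then for every
contraction `Δ1` (in the `ℓ∞ → ℓ∞` induced norm), `I - Y Δ1` is invertible and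
`‖X + X Δ1 (I - Y Δ1)⁻¹ Y‖ < 1`. -/
theorem stmt7 {p1 p2 q : Type*} [Fintype p1] [Fintype p2] [Fintype q]
    [DecidableEq p2] [DecidableEq q]
    (X : Matrix p1 q ℝ) (Y : Matrix p2 q ℝ)
    (hXY : ‖X‖ + ‖Y‖ < 1) :
    ∀ Δ1 : Matrix q p2 ℝ, ‖Δ1‖ ≤ 1 →
      IsUnit (1 - Y * Δ1) ∧ ‖X + X * Δ1 * (1 - Y * Δ1)⁻¹ * Y‖ < 1 := by
  intro Δ1 hΔ
  have hX0 : 0 ≤ ‖X‖ := norm_nonneg _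
  have hY1 : ‖Y‖ < 1 := by linarith
  have ht : ‖Y * Δ1‖ < 1 := by
    calc ‖Y * Δ1‖ ≤ ‖Y‖ * ‖Δ1‖ := Matrix.linfty_opNorm_mul _ _
    _ ≤ ‖Y‖ * 1 := by nlinarith [norm_nonneg Y]
    _ < 1 := by linarith
  haveI : HasSummableGeomSeries (Matrix p2 p2 ℝ) := by
    letI := (Matrix.linftyOpNormedAlgebra : NormedAlgebra ℝ (Matrix p2 p2 ℝ))
    haveI : CompleteSpace (Matrix p2 p2 ℝ) := FiniteDimensional.complete ℝ _
    infer_instance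
  have hU : IsUnit (1 - Y * Δ1) := isUnit_one_sub_of_norm_lt_one ht
  refine ⟨hU, ?_⟩
  -- identify the matrix inverse with the geometric series
  have hinv_eq : (1 - Y * Δ1)⁻¹ = ∑' n : ℕ, (Y * Δ1) ^ n := by
    rw [Matrix.nonsing_inv_eq_ringInverse, ← geom_series_eq_inverse _ ht]
    rfl
  have hone : ‖(1 : Matrix p2 p2 ℝ)‖ ≤ 1 := by
    rw [← Matrix.diagonal_one, Matrix.linfty_opNorm_diagonal]
    exact pi_norm_le_iff_of_nonneg zero_le_one |>.2 fun i => by simp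
  have hinv : ‖(1 - Y * Δ1)⁻¹‖ ≤ (1 - ‖Y * Δ1‖)⁻¹ := by
    rw [hinv_eq]
    have := tsum_geometric_le_of_norm_lt_one (Y * Δ1) ht
    exact this.trans (add_le_of_nonpos_left (sub_nonpos.2 hone))
  have htY : ‖Y * Δ1‖ ≤ ‖Y‖ := by
    calc ‖Y * Δ1‖ ≤ ‖Y‖ * ‖Δ1‖ := Matrix.linfty_opNorm_mul _ _
    _ ≤ ‖Y‖ * 1 := by nlinarith [norm_nonneg Y]
    _ = ‖Y‖ := mul_one _
  have hinv' : ‖(1 - Y * Δ1)⁻¹‖ ≤ (1 - ‖Y‖)⁻¹ := by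
    refine hinv.trans (inv_anti₀ (by linarith) (by linarith))
  have hbound : ‖X + X * Δ1 * (1 - Y * Δ1)⁻¹ * Y‖
      ≤ ‖X‖ + ‖X‖ * ‖Δ1‖ * ‖(1 - Y * Δ1)⁻¹‖ * ‖Y‖ := by
    refine (norm_add_le _ _).trans ?_
    gcongr
    calc ‖X * Δ1 * (1 - Y * Δ1)⁻¹ * Y‖ ≤ ‖X * Δ1 * (1 - Y * Δ1)⁻¹‖ * ‖Y‖ :=
          Matrix.linfty_opNorm_mul _ _
    _ ≤ ‖X * Δ1‖ * ‖(1 - Y * Δ1)⁻¹‖ * ‖Y‖ := by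
          gcongr ?_ * _; exact Matrix.linfty_opNorm_mul _ _
    _ ≤ ‖X‖ * ‖Δ1‖ * ‖(1 - Y * Δ1)⁻¹‖ * ‖Y‖ := by
          gcongr ?_ * _ * _; exact Matrix.linfty_opNorm_mul _ _
  have h1Y : (0:ℝ) < 1 - ‖Y‖ := by linarith
  have hmul : (1 - ‖Y‖) * (1 - ‖Y‖)⁻¹ = 1 := mul_inv_cancel₀ (ne_of_gt h1Y)
  have hstep : ‖X‖ * ‖Δ1‖ * ‖(1 - Y * Δ1)⁻¹‖ * ‖Y‖ ≤ ‖X‖ * (1 - ‖Y‖)⁻¹ * ‖Y‖ := by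
    calc ‖X‖ * ‖Δ1‖ * ‖(1 - Y * Δ1)⁻¹‖ * ‖Y‖ ≤ ‖X‖ * 1 * (1 - ‖Y‖)⁻¹ * ‖Y‖ := by
          gcongr
    _ = ‖X‖ * (1 - ‖Y‖)⁻¹ * ‖Y‖ := by ring
  have hfin : ‖X‖ + ‖X‖ * (1 - ‖Y‖)⁻¹ * ‖Y‖ < 1 := by
    have heq : ‖X‖ + ‖X‖ * (1 - ‖Y‖)⁻¹ * ‖Y‖ = ‖X‖ * (1 - ‖Y‖)⁻¹ := by
      field_simp
      ring
    rw [heq, ← div_eq_mul_inv]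
    exact (div_lt_one h1Y).2 (by linarith)
  linarith
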